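/- Let k ≥ 1, let (c_n) be an oscillating sequence of order k, let X be a set, T : X → X any map, and f : X → ℂ with |f(x)| = 1 for all x such that Λ^{k+1} f is identically 1, where (Λf)(x) = f(Tx)·conj(f(x)). Then for every x ∈ X, (1/N) ∑_{n=0}^{N-1} c_n f(T^n x) → 0 as N → ∞. -/

import Mathlib

open Filter Finset Polynomial

/-- `c` is an oscillating sequence of order `k`. -/
def OscillatingOfOrder (c : ℕ → ℂ) (k : ℕ) : Prop :=
  (∃ l : ℝ, 1 ≤ l ∧
      (fun N : ℕ => ∑ n ∈ Finset.Icc 1 N, ‖c n‖ ^ l)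
        =O[atTop] (fun N : ℕ => (N : ℝ))) ∧
  ∀ P : Polynomial ℝ, P.natDegree ≤ k →
    Tendsto (fun N : ℕ => (N : ℂ)⁻¹ *
        ∑ n ∈ Finset.Icc 1 N, c n * Complex.exp (2 * Real.pi * Complex.I * (P.eval (n : ℝ))))
      atTop (nhds 0)

/-- The derived homomorphism `(Λ f) x = f (T x) · conj (f x)` on complex valued functions. -/
def derivedHom {X : Type*} (T : X → X) (f : X → ℂ) : X → ℂ :=
  fun x => f (T x) * (starRingEnd ℂ) (f x)

/-- Discrete antiderivative of a polynomial. -/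
lemma exists_sum_poly : ∀ d : ℕ, ∀ Q : Polynomial ℝ, Q.natDegree ≤ d →
    ∃ R : Polynomial ℝ, R.natDegree ≤ d + 1 ∧ ∀ n : ℕ, R.eval (n : ℝ) = ∑ j ∈ range n, Q.eval (j : ℝ) := by
  intro d
  induction d with
  | zero =>
    intro Q hQ
    refine ⟨C (Q.coeff 0) * X, ?_, ?_⟩
    · exact le_trans (natDegree_C_mul_le _ _) (by simp)
    · intro n
      rw [eq_C_of_natDegree_le_zero hQ]
      rw [Polynomial.eval_mul, Polynomial.eval_C, Polynomial.eval_X]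
      simp [Finset.sum_const, nsmul_eq_mul, mul_comm]
  | succ d ih =>
    intro Q hQ
    set a := Q.coeff (d + 1) with ha
    set S : Polynomial ℝ := C (a / (d + 2)) * X ^ (d + 2) with hS
    set D : Polynomial ℝ := S.comp (X + 1) - S with hD
    have hd2 : ((d : ℝ) + 2) ≠ 0 := by positivity
    have hDcoeff : ∀ m : ℕ, D.coeff m =
        a / (d + 2) * ((d + 2).choose m - if d + 2 = m then (1 : ℝ) else 0) := by
      intro m
      rw [hD, hS, coeff_sub, mul_comp, C_comp, X_pow_comp, coeff_C_mul, coeff_C_mul,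
        coeff_X_add_one_pow, coeff_X_pow, ← mul_sub]
      simp [eq_comm]
    have hQ'deg : (Q - D).natDegree ≤ d := by
      rw [natDegree_le_iff_coeff_eq_zero]
      intro m hm
      rw [coeff_sub, hDcoeff m]
      rcases lt_trichotomy m (d + 2) with h | h | h
      · have hm' : m = d + 1 := by omega
        subst hm'
        rw [if_neg (by omega), Nat.choose_succ_self_right]
        have hQm : Q.coeff (d + 1) = a := rfl
        rw [hQm]
        push_cast
        field_simp
        ring
      · subst h
        rw [if_pos rfl, Nat.choose_self, coeff_eq_zero_of_natDegree_lt (by omega)]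
        simp
      · rw [if_neg (by omega), Nat.choose_eq_zero_of_lt h,
          coeff_eq_zero_of_natDegree_lt (by omega)]
        simp
    obtain ⟨R', hR'deg, hR'⟩ := ih (Q - D) hQ'deg
    refine ⟨R' + S, ?_, ?_⟩
    · refine le_trans (natDegree_add_le _ _) (max_le (by omega) ?_)
      exact le_trans (natDegree_C_mul_le _ _) (by simp)
    · intro n
      have hDeval : ∀ j : ℕ, D.eval (j : ℝ) = S.eval ((j : ℝ) + 1) - S.eval (j : ℝ) := by
        intro j; rw [hD]; simp [eval_comp]
      have htel : ∑ j ∈ range n, D.eval (j : ℝ) = S.eval (n : ℝ) := by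
        have := Finset.sum_range_sub (fun j : ℕ => S.eval (j : ℝ)) n
        calc ∑ j ∈ range n, D.eval (j : ℝ)
            = ∑ j ∈ range n, (S.eval ((j + 1 : ℕ) : ℝ) - S.eval (j : ℝ)) := by
              refine Finset.sum_congr rfl fun j _ => ?_
              rw [hDeval j]; push_cast; ring_nf
          _ = S.eval (n : ℝ) - S.eval ((0 : ℕ) : ℝ) := this
          _ = S.eval (n : ℝ) := by rw [hS]; simp
      have : ∑ j ∈ range n, Q.eval (j : ℝ)
          = ∑ j ∈ range n, (Q - D).eval (j : ℝ) + ∑ j ∈ range n, D.eval (j : ℝ) := by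
        rw [← Finset.sum_add_distrib]
        refine Finset.sum_congr rfl fun j _ => by simp
      rw [this, ← hR' n, htel, eval_add]
/-- Discrete difference operator on unimodular sequences. -/
noncomputable def seqD (u : ℕ → ℂ) : ℕ → ℂ := fun n => u (n + 1) * (starRingEnd ℂ) (u n)

lemma seqD_abs {u : ℕ → ℂ} (h : ∀ n, ‖u n‖ = 1) :
    ∀ n, ‖seqD u n‖ = 1 := by
  intro n; simp [seqD, map_mul, h]

lemma conj_mul_self_of_abs_one {z : ℂ} (hz : ‖z‖ = 1) :
    (starRingEnd ℂ) z * z = 1 := by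
  rw [← Complex.normSq_eq_conj_mul_self, Complex.normSq_eq_norm_sq, hz]
  norm_num

lemma exists_poly_of_seqD : ∀ m : ℕ, ∀ u : ℕ → ℂ, (∀ n, ‖u n‖ = 1) →
    (∀ n, seqD^[m + 1] u n = 1) →
    ∃ P : Polynomial ℝ, P.natDegree ≤ m ∧
      ∀ n : ℕ, u n = Complex.exp (2 * Real.pi * Complex.I * (P.eval (n : ℝ))) := by
  intro m
  induction m with
  | zero =>
    intro u habs hD
    obtain ⟨θ, hθ⟩ := (Complex.norm_eq_one_iff (u 0)).mp (habs 0)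
    have hconst : ∀ n, u n = u 0 := by
      intro n
      induction n with
      | zero => rfl
      | succ n ih =>
        have h2 : u (n + 1) * (starRingEnd ℂ) (u n) = 1 := hD n
        have h3 : u (n + 1) * ((starRingEnd ℂ) (u n) * u n) = 1 * u n := by
          rw [← mul_assoc, h2]
        rw [conj_mul_self_of_abs_one (habs n), mul_one, one_mul] at h3
        exact h3.trans ih
    refine ⟨C (θ / (2 * Real.pi)), (natDegree_C _).le, fun n => ?_⟩
    rw [hconst n, ← hθ, eval_C]
    congr 1
    have hpi : (Real.pi : ℂ) ≠ 0 := by exact_mod_cast Real.pi_ne_zero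
    push_cast
    field_simp
  | succ m ih =>
    intro u habs hD
    have hv : ∀ n, seqD^[m + 1] (seqD u) n = 1 := by
      intro n
      have := hD n
      rwa [Function.iterate_succ_apply] at this
    obtain ⟨Q, hQdeg, hQ⟩ := ih (seqD u) (seqD_abs habs) hv
    have hstep : ∀ n, u (n + 1) = u n * seqD u n := by
      intro n
      have h3 : u (n + 1) * ((starRingEnd ℂ) (u n) * u n) = seqD u n * u n := by
        rw [← mul_assoc]; rfl
      rw [conj_mul_self_of_abs_one (habs n), mul_one] at h3
      rw [h3, mul_comm]
    have hrec : ∀ n, u n = u 0 *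
        Complex.exp (2 * Real.pi * Complex.I * ((∑ j ∈ range n, Q.eval (j : ℝ) : ℝ) : ℂ)) := by
      intro n
      induction n with
      | zero => simp
      | succ n ihn =>
        rw [hstep n, ihn, hQ n, mul_assoc, ← Complex.exp_add, sum_range_succ]
        push_cast
        ring_nf
    obtain ⟨R, hRdeg, hR⟩ := exists_sum_poly m Q hQdeg
    obtain ⟨θ, hθ⟩ := (Complex.norm_eq_one_iff (u 0)).mp (habs 0)
    refine ⟨C (θ / (2 * Real.pi)) + R, ?_, fun n => ?_⟩
    · exact le_trans (natDegree_add_le _ _) (max_le (by simp) hRdeg)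
    · rw [hrec n, ← hθ, ← hR n, eval_add, eval_C, ← Complex.exp_add]
      congr 1
      have hpi : (Real.pi : ℂ) ≠ 0 := by exact_mod_cast Real.pi_ne_zero
      push_cast
      field_simp
lemma derivedHom_iterate_apply {X : Type*} (T : X → X) :
    ∀ (m : ℕ) (f : X → ℂ) (x : X) (n : ℕ),
      ((derivedHom T)^[m] f) (T^[n] x) = (seqD^[m] (fun j => f (T^[j] x))) n := by
  intro m
  induction m with
  | zero => intro f x n; rfl
  | succ m ih =>
    intro f x n
    rw [Function.iterate_succ_apply, Function.iterate_succ_apply, ih (derivedHom T f) x n]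
    have harg : (fun j => derivedHom T f (T^[j] x)) = seqD (fun j => f (T^[j] x)) := by
      funext j
      simp only [seqD, derivedHom]
      rw [← Function.iterate_succ_apply' T j x]
    rw [harg]

lemma tendsto_range_of_tendsto_Icc (a : ℕ → ℂ)
    (h : Tendsto (fun N : ℕ => (N : ℂ)⁻¹ * ∑ n ∈ Icc 1 N, a n) atTop (nhds 0)) :
    Tendsto (fun N : ℕ => (N : ℂ)⁻¹ * ∑ n ∈ range N, a n) atTop (nhds 0) := by
  set g : ℕ → ℂ := fun N => (N : ℂ)⁻¹ * ∑ n ∈ Icc 1 N, a n with hg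
  have hb : Tendsto (fun N : ℕ => ‖g (N - 1)‖ + ‖a 0‖ * (N : ℝ)⁻¹) atTop (nhds 0) := by
    have h1 : Tendsto (fun N : ℕ => ‖g (N - 1)‖) atTop (nhds 0) := by
      have := (h.comp (tendsto_sub_atTop_nat 1)).norm
      simpa using this
    have h2 : Tendsto (fun N : ℕ => ‖a 0‖ * (N : ℝ)⁻¹) atTop (nhds 0) := by
      simpa using tendsto_const_nhds.mul (tendsto_inv_atTop_nhds_zero_nat (𝕜 := ℝ))
    simpa using h1.add h2
  refine squeeze_zero_norm' ?_ hb
  filter_upwards [eventually_ge_atTop 2] with N hN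
  have hsplit : ∑ n ∈ range N, a n = a 0 + ∑ n ∈ Icc 1 (N - 1), a n := by
    have hN' : N - 1 + 1 = N := by omega
    rw [← Finset.Ico_add_one_right_eq_Icc, hN', Finset.range_eq_Ico,
      Finset.sum_eq_sum_Ico_succ_bot (by omega : 0 < N)]
  have hnormN : ‖((N : ℂ))⁻¹‖ = ((N : ℝ))⁻¹ := by
    rw [norm_inv]; norm_num
  have hnormN1 : ‖(((N - 1 : ℕ) : ℂ))⁻¹‖ = (((N - 1 : ℕ) : ℝ))⁻¹ := by
    rw [norm_inv]; norm_num
  have hinvle : ((N : ℝ))⁻¹ ≤ (((N - 1 : ℕ) : ℝ))⁻¹ := by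
    apply inv_anti₀
    · have : (1 : ℕ) ≤ N - 1 := by omega
      exact_mod_cast lt_of_lt_of_le zero_lt_one (by exact_mod_cast this)
    · exact_mod_cast Nat.sub_le N 1
  calc ‖(N : ℂ)⁻¹ * ∑ n ∈ range N, a n‖
      = ((N : ℝ))⁻¹ * ‖a 0 + ∑ n ∈ Icc 1 (N - 1), a n‖ := by
        rw [hsplit, norm_mul, hnormN]
    _ ≤ ((N : ℝ))⁻¹ * (‖a 0‖ + ‖∑ n ∈ Icc 1 (N - 1), a n‖) := by
        exact mul_le_mul_of_nonneg_left (norm_add_le _ _) (by positivity)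
    _ = ((N : ℝ))⁻¹ * ‖∑ n ∈ Icc 1 (N - 1), a n‖ + ‖a 0‖ * ((N : ℝ))⁻¹ := by ring
    _ ≤ ‖g (N - 1)‖ + ‖a 0‖ * ((N : ℝ))⁻¹ := by
        have : ‖g (N - 1)‖ = (((N - 1 : ℕ) : ℝ))⁻¹ * ‖∑ n ∈ Icc 1 (N - 1), a n‖ := by
          rw [hg]; rw [norm_mul, hnormN1]
        rw [this]
        have := mul_le_mul_of_nonneg_right hinvle (norm_nonneg (∑ n ∈ Icc 1 (N - 1), a n))
        linarith

/-- An oscillating sequence `(c n)` of order `k` is orthogonal to every quasi-eigenfunction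
of order `k`: if `|f| ≡ 1` and `Λ^{k+1} f ≡ 1` then for every `x`,
`(1/N) ∑_{n=0}^{N-1} c n · f (T^n x) → 0`. -/
theorem oscillating_orthogonal_to_quasiEigenfunction
    {X : Type*} (T : X → X) (k : ℕ) (hk : 1 ≤ k) (c : ℕ → ℂ)
    (hc : OscillatingOfOrder c k) (f : X → ℂ)
    (hmod : ∀ x, ‖f x‖ = 1)
    (hquasi : ∀ x, ((derivedHom T)^[k + 1] f) x = 1) :
    ∀ x : X,
      Tendsto (fun N : ℕ => (N : ℂ)⁻¹ * ∑ n ∈ Finset.range N, c n * f (T^[n] x))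
        atTop (nhds 0) := by
  intro x
  set u : ℕ → ℂ := fun n => f (T^[n] x) with hu
  have habs : ∀ n, ‖u n‖ = 1 := fun n => hmod _
  have hDu : ∀ n, seqD^[k + 1] u n = 1 := fun n =>
    (derivedHom_iterate_apply T (k + 1) f x n).symm.trans (hquasi _)
  obtain ⟨P, hPdeg, hP⟩ := exists_poly_of_seqD k u habs hDu
  have hfun : (fun N : ℕ => (N : ℂ)⁻¹ * ∑ n ∈ Finset.range N, c n * f (T^[n] x)) =
      fun N : ℕ => (N : ℂ)⁻¹ * ∑ n ∈ Finset.range N,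
        (c n * Complex.exp (2 * Real.pi * Complex.I * (P.eval (n : ℝ)))) := by
    funext N
    congr 1
    exact Finset.sum_congr rfl fun n _ => by rw [show f (T^[n] x) = u n from rfl, hP n]
  rw [hfun]
  exact tendsto_range_of_tendsto_Icc _ (hc.2 P hPdeg)
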